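/- There exists a subset A of (ℤ,+) that is stable but not k-stable for any k ≥ 1. Concretely, if for each n ≥ 1 one chooses an n-term arithmetic progression A_n ⊆ ℤ with common difference n such that min A_n > max A_{n-1} + n², then A = ⋃_{n≥1} A_n is stable but for every k there exist a_1,...,a_k, b_1,...,b_k ∈ ℤ with a_i + b_j ∈ A iff i ≤ j. -/
import Mathlib


lemma gap_lemma (s : ℕ → ℤ)
    (hs : ∀ n : ℕ, 2 ≤ n → s (n - 1) + ((n : ℤ) - 2) * ((n : ℤ) - 1) + (n : ℤ) ^ 2 < s n)
    {m n : ℕ} (hm : 1 ≤ m) (hmn : m < n) :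
    s m + ((m : ℤ) - 1) * m + (n : ℤ) ^ 2 < s n := by
  induction n, hmn using Nat.le_induction with
  | base =>
      have h := hs (m + 1) (by omega)
      simp only [Nat.add_sub_cancel] at h
      push_cast at h ⊢
      nlinarith [h]
  | succ n hn ih =>
      have h := hs (n + 1) (by omega)
      simp only [Nat.add_sub_cancel] at h
      have h1 : (1:ℤ) ≤ (n:ℤ) := by omega
      push_cast at h ⊢
      nlinarith [ih, h1]

set_option maxHeartbeats 1000000 in
lemma part_stable (s : ℕ → ℤ)
    (hs : ∀ n : ℕ, 2 ≤ n → s (n - 1) + ((n : ℤ) - 2) * ((n : ℤ) - 1) + (n : ℤ) ^ 2 < s n)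
    (a b : ℕ → ℤ)
    (hab : ∀ i j : ℕ, (∃ n : ℕ, 1 ≤ n ∧ ∃ t : ℕ, t < n ∧ a i + b j = s n + t * n) ↔ i ≤ j) :
    False := by
  have hx00 := (hab 0 0).mpr le_rfl
  have hx10 : ¬ (∃ n : ℕ, 1 ≤ n ∧ ∃ t : ℕ, t < n ∧ a 1 + b 0 = s n + t * n) :=
    fun h => by simpa using (hab 1 0).mp h
  have hane : a 0 ≠ a 1 := fun h => hx10 (h ▸ hx00)
  obtain ⟨d, hdd⟩ : ∃ d : ℤ, d = a 0 - a 1 := ⟨_, rfl⟩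
  have hd0 : d ≠ 0 := hdd ▸ sub_ne_zero.mpr hane
  obtain ⟨D, hDdef⟩ : ∃ D : ℕ, D = d.natAbs := ⟨_, rfl⟩
  have hD1 : 1 ≤ D := hDdef ▸ Int.natAbs_pos.mpr hd0
  have habs1 : -(D:ℤ) ≤ d := by omega
  have habs2 : d ≤ (D:ℤ) := by omega
  -- every element of A is ≥ s 1
  have hlow : ∀ n : ℕ, 1 ≤ n → ∀ t : ℕ, t < n → s 1 ≤ s n + (t:ℤ) * n := by
    intro n hn t ht
    have hi0 : (0:ℤ) ≤ (t:ℤ) * n := by positivity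
    rcases Nat.eq_or_lt_of_le hn with h1 | h1
    · rw [← h1]; push_cast; linarith [Int.ofNat_nonneg t]
    · have := gap_lemma s hs (le_refl 1) h1
      push_cast at this
      nlinarith [this, sq_nonneg ((n:ℤ))]
  have hmem0 : ∀ j : ℕ, ∃ n : ℕ, 1 ≤ n ∧ ∃ t : ℕ, t < n ∧ a 0 + b j = s n + t * n :=
    fun j => (hab 0 j).mpr (Nat.zero_le j)
  have hlow0 : ∀ j : ℕ, s 1 ≤ a 0 + b j := by
    intro j
    obtain ⟨n, hn, t, ht, he⟩ := hmem0 j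
    rw [he]; exact hlow n hn t ht
  have hbinj : Function.Injective b := by
    intro j j' h
    by_contra hne
    rcases Nat.lt_or_ge j j' with hlt | hlt
    · have h1 := (hab j' j').mpr le_rfl
      rw [← h] at h1
      have := (hab j' j).mp h1; omega
    · have hlt' : j' < j := by omega
      have h1 := (hab j j).mpr le_rfl
      rw [h] at h1
      have := (hab j j').mp h1; omega
  have hub : ∀ M : ℤ, ∃ j : ℕ, 1 ≤ j ∧ M < a 0 + b j := by
    intro M
    by_contra hcon
    push_neg at hcon
    have hinj : Function.Injective (fun j : ℕ => a 0 + b (j + 1)) := by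
      intro x y hxy
      have h' : a 0 + b (x + 1) = a 0 + b (y + 1) := hxy
      have := hbinj (add_left_cancel h'); omega
    have hinf := Set.infinite_range_of_injective hinj
    apply hinf
    apply (Set.finite_Icc (s 1) M).subset
    rintro _ ⟨j, rfl⟩
    exact ⟨hlow0 (j + 1), hcon (j + 1) (by omega)⟩
  obtain ⟨j, hj1, hjbig⟩ := hub (s D + ((D:ℤ) - 1) * D)
  obtain ⟨n, hn1, i, hi, hxeq⟩ := hmem0 j
  have hn0 : (1:ℤ) ≤ (n:ℤ) := by omega
  have hiub : (i:ℤ) ≤ (n:ℤ) - 1 := by omega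
  have hnD : D < n := by
    by_contra hc
    push_neg at hc
    have hle : s n + (i:ℤ) * n ≤ s D + ((D:ℤ) - 1) * D := by
      rcases Nat.eq_or_lt_of_le hc with h1 | h1
      · have hiD : (i:ℤ) ≤ (D:ℤ) - 1 := by omega
        rw [h1]
        nlinarith [hiD, Int.ofNat_nonneg D]
      · have hg := gap_lemma s hs hn1 h1
        nlinarith [hg, hiub, Int.ofNat_nonneg n, sq_nonneg ((D:ℤ)), hD1, Int.ofNat_nonneg D]
    rw [hxeq] at hjbig
    linarith
  have hn2 : (D:ℤ) < (n:ℤ) := by omega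
  obtain ⟨m, hm1, i', hi', hyeq⟩ := (hab 1 j).mpr hj1
  have key : s m + (i':ℤ) * m = s n + (i:ℤ) * n - d := by
    rw [← hyeq, ← hxeq, hdd]; ring
  have hm0 : (1:ℤ) ≤ (m:ℤ) := by omega
  have hiub' : (i':ℤ) ≤ (m:ℤ) - 1 := by omega
  have hprod : (i':ℤ) * m ≤ ((m:ℤ) - 1) * m :=
    mul_le_mul_of_nonneg_right hiub' (by omega)
  have hprod2 : (i:ℤ) * n ≤ ((n:ℤ) - 1) * n :=
    mul_le_mul_of_nonneg_right hiub (by omega)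
  have hprod0 : (0:ℤ) ≤ (i:ℤ) * n := by positivity
  have hprod0' : (0:ℤ) ≤ (i':ℤ) * m := by positivity
  rcases lt_trichotomy m n with hmn | hmn | hmn
  · have hg := gap_lemma s hs hm1 hmn
    nlinarith [hg, habs1, habs2, hn2, hprod, hprod0, sq_nonneg ((n:ℤ) - 1)]
  · subst hmn
    have hkey2 : d = ((i:ℤ) - i') * m := by linarith [key]
    rcases lt_trichotomy i i' with hii | hii | hii
    · have h1 : (1:ℤ) ≤ (i':ℤ) - i := by omega
      have hp : (m:ℤ) ≤ ((i':ℤ) - i) * m := by nlinarith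
      have hdle : d ≤ -(m:ℤ) := by nlinarith [hkey2, hp]
      linarith [habs1, hn2]
    · exact hd0 (by rw [hkey2, hii]; ring)
    · have h1 : (1:ℤ) ≤ (i:ℤ) - i' := by omega
      have hp : (m:ℤ) ≤ ((i:ℤ) - i') * m := by nlinarith
      have hdge : (m:ℤ) ≤ d := by nlinarith [hkey2, hp]
      linarith [habs2, hn2]
  · have hg := gap_lemma s hs hn1 hmn
    have hm2 : (n:ℤ) < (m:ℤ) := by omega
    nlinarith [hg, habs1, habs2, hn2, hprod2, hprod0', sq_nonneg ((m:ℤ) - 1)]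

set_option maxHeartbeats 1000000 in
lemma part_unstable (s : ℕ → ℤ)
    (hs : ∀ n : ℕ, 2 ≤ n → s (n - 1) + ((n : ℤ) - 2) * ((n : ℤ) - 1) + (n : ℤ) ^ 2 < s n)
    (k : ℕ) (hk : 1 ≤ k) (i j : Fin k) :
    (∃ n : ℕ, 1 ≤ n ∧ ∃ t : ℕ, t < n ∧
      -((i.val : ℕ) : ℤ) * k + (s k + ((j.val : ℕ) : ℤ) * k) = s n + t * n) ↔ i ≤ j := by
  have hk0 : (1:ℤ) ≤ (k:ℤ) := by omega
  have hik : i.val < k := i.isLt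
  have hjk : j.val < k := j.isLt
  constructor
  · rintro ⟨n, hn, t, ht, hx⟩
    by_contra hij
    rw [Fin.le_def, not_le] at hij
    have hji : ((j.val : ℕ) : ℤ) - ((i.val : ℕ) : ℤ) ≤ -1 := by omega
    have hilt : ((i.val : ℕ) : ℤ) ≤ (k:ℤ) - 1 := by omega
    have hjnn : (0:ℤ) ≤ ((j.val : ℕ) : ℤ) := by omega
    have htub : (t:ℤ) ≤ (n:ℤ) - 1 := by omega
    have hn0 : (1:ℤ) ≤ (n:ℤ) := by omega
    have hx' : s k + (((j.val : ℕ) : ℤ) - ((i.val : ℕ) : ℤ)) * k = s n + (t:ℤ) * n := by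
      rw [← hx]; ring
    have htn : (t:ℤ) * n ≤ ((n:ℤ) - 1) * n := mul_le_mul_of_nonneg_right htub (by omega)
    have htn0 : (0:ℤ) ≤ (t:ℤ) * n := by positivity
    rcases lt_trichotomy n k with hnk | hnk | hnk
    · have hg := gap_lemma s hs hn hnk
      have hjk2 : -(((k:ℤ) - 1) * k) ≤ (((j.val : ℕ) : ℤ) - ((i.val : ℕ) : ℤ)) * k := by
        have h1 : -((k:ℤ) - 1) ≤ ((j.val : ℕ) : ℤ) - ((i.val : ℕ) : ℤ) := by omega
        nlinarith [h1, hk0]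
      nlinarith [hg, hx', htn, hjk2, hk0]
    · subst hnk
      have h1 : (1:ℤ) ≤ (t:ℤ) - (((j.val : ℕ) : ℤ) - ((i.val : ℕ) : ℤ)) := by omega
      have hp : (n:ℤ) ≤ ((t:ℤ) - (((j.val : ℕ) : ℤ) - ((i.val : ℕ) : ℤ))) * n := by nlinarith
      nlinarith [hx', hp, hn0]
    · have hg := gap_lemma s hs hk hnk
      have hn2 : (k:ℤ) < (n:ℤ) := by omega
      have hneg : (((j.val : ℕ) : ℤ) - ((i.val : ℕ) : ℤ)) * k ≤ -(k:ℤ) := by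
        nlinarith [hji, hk0]
      nlinarith [hg, hx', htn0, hneg, hk0, sq_nonneg ((n:ℤ)),
        mul_nonneg (by linarith : (0:ℤ) ≤ (k:ℤ) - 1) (by linarith : (0:ℤ) ≤ (k:ℤ))]
  · intro hij
    rw [Fin.le_def] at hij
    refine ⟨k, hk, j.val - i.val, lt_of_le_of_lt (Nat.sub_le _ _) j.isLt, ?_⟩
    have hc : ((j.val - i.val : ℕ) : ℤ) = ((j.val : ℕ) : ℤ) - ((i.val : ℕ) : ℤ) := by omega
    rw [hc]; ring



/-- `A ⊆ ℤ` is additively stable if there are no sequences `a b : ℕ → ℤ` with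
`a i + b j ∈ A ↔ i ≤ j`. -/
def IsStableInt (A : Set ℤ) : Prop :=
  ¬ ∃ a b : ℕ → ℤ, ∀ i j : ℕ, a i + b j ∈ A ↔ i ≤ j

theorem stable_not_kStable (s : ℕ → ℤ)
    (hs : ∀ n : ℕ, 2 ≤ n → s (n - 1) + ((n : ℤ) - 2) * ((n : ℤ) - 1) + (n : ℤ) ^ 2 < s n) :
    let A : Set ℤ := ⋃ n ∈ {n : ℕ | 1 ≤ n}, {x : ℤ | ∃ i : ℕ, i < n ∧ x = s n + i * n}
    IsStableInt A ∧
      ∀ k : ℕ, 1 ≤ k → ∃ a b : Fin k → ℤ, ∀ i j : Fin k, a i + b j ∈ A ↔ i ≤ j := by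
  intro A
  have hA : A = ⋃ n ∈ {n : ℕ | 1 ≤ n}, {x : ℤ | ∃ i : ℕ, i < n ∧ x = s n + i * n} := rfl
  have memA : ∀ x : ℤ, x ∈ A ↔ ∃ n : ℕ, 1 ≤ n ∧ ∃ t : ℕ, t < n ∧ x = s n + t * n := by
    intro x
    rw [hA]
    simp only [Set.mem_iUnion, Set.mem_setOf_eq, exists_prop]
  constructor
  · rintro ⟨a, b, hab⟩
    refine part_stable s hs a b fun i j => ?_
    rw [← hab i j, memA]
  · intro k hk
    refine ⟨fun i => -((i.val : ℕ) : ℤ) * k, fun j => s k + ((j.val : ℕ) : ℤ) * k, ?_⟩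
    intro i j
    rw [memA]
    exact part_unstable s hs k hk i j
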